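/- Let a₁ > a₂ > a₃ be real numbers and l ≥ 0 a real number. Let β₁, β₂, β₃ be real numbers satisfying β₁ + β₂ + β₃ = −(a₁ + a₂ + a₃) and β₁² + β₂² + β₃² = −l + a₁² + a₂² + a₃². Then a₁ + β₁ ≥ 0 or (a₁ + a₂) + (β₁ + β₂) ≥ 0. -/
import Mathlib


/-- The numerical core of the length-two Harder–Narasimhan filtration (rank 3)
case of Proposition 2: under the two constraints on `β₁, β₂, β₃`, the parabolic
degree of `E₁` or of `E₂` is non-negative, i.e. `a₁ + β₁ ≥ 0` or
`(a₁ + a₂) + (β₁ + β₂) ≥ 0`. -/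
theorem rank_three_parabolic_degree_nonneg
    (a₁ a₂ a₃ l : ℝ) (h12 : a₂ < a₁) (h23 : a₃ < a₂) (hl : 0 ≤ l)
    (β₁ β₂ β₃ : ℝ)
    (hsum : β₁ + β₂ + β₃ = -(a₁ + a₂ + a₃))
    (hsq : β₁ ^ 2 + β₂ ^ 2 + β₃ ^ 2 = -l + a₁ ^ 2 + a₂ ^ 2 + a₃ ^ 2) :
    0 ≤ a₁ + β₁ ∨ 0 ≤ (a₁ + a₂) + (β₁ + β₂) := by
  by_contra h
  push_neg at h
  obtain ⟨h1, h2⟩ := h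
  nlinarith [sq_nonneg (a₁ + β₁), sq_nonneg (a₂ + β₂), sq_nonneg (a₃ + β₃),
    mul_pos (sub_pos.mpr h12) (neg_pos.mpr h1),
    mul_pos (sub_pos.mpr h23) (neg_pos.mpr h2)]
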